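/- Let q ∈ (3/2, 2) and β ≥ q−1, and define h_β(y) = y^q + (1−y)^q + 2β y^{q/2}(1−y)^{q/2}. Then h_β attains its maximum on [0,1] at y = 1/2, i.e. h_β(y) ≤ h_β(1/2) = (1+β)·2^{1−q} for all y ∈ [0,1]. -/

import Mathlib

open Real

private lemma sinh_mul_le' (p t : ℝ) (hp0 : 0 ≤ p) (hp1 : p ≤ 1) (ht : 0 ≤ t) :
    Real.sinh (p * t) ≤ p * Real.sinh t := by
  have key : MonotoneOn (fun t => p * Real.sinh t - Real.sinh (p * t)) (Set.Ici 0) := by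
    have hd : ∀ s : ℝ, HasDerivAt (fun t => p * Real.sinh t - Real.sinh (p * t))
        (p * Real.cosh s - Real.cosh (p * s) * p) s := fun s => by
      have h1 := (Real.hasDerivAt_sinh s).const_mul p
      have h2 := (Real.hasDerivAt_sinh (p * s)).comp s ((hasDerivAt_id s).const_mul p)
      exact h1.sub (by simpa [Function.comp_def] using h2)
    apply monotoneOn_of_deriv_nonneg (convex_Ici 0)
    · exact (Continuous.continuousOn (by continuity))
    · exact fun s _ => ((hd s).differentiableAt).differentiableWithinAt
    · intro s hs
      rw [(hd s).deriv]
      rw [interior_Ici] at hs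
      have hs' : (0:ℝ) ≤ s := le_of_lt hs
      have : Real.cosh (p * s) ≤ Real.cosh s := by
        rw [Real.cosh_le_cosh]
        rw [abs_of_nonneg (mul_nonneg hp0 hs'), abs_of_nonneg hs']
        nlinarith
      nlinarith
  have h0 := key (Set.self_mem_Ici) (Set.mem_Ici.2 ht) ht
  simp at h0
  linarith

private lemma exp_key' (p c t : ℝ) (hp0 : 0 ≤ p) (hp1 : p ≤ 1) (ht : 0 ≤ t) :
    Real.exp (p * (c + t)) - Real.exp (p * (c - t))
      ≤ p * Real.exp ((p - 1) * c) * (Real.exp (c + t) - Real.exp (c - t)) := by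
  have hs := sinh_mul_le' p t hp0 hp1 ht
  rw [Real.sinh_eq, Real.sinh_eq] at hs
  have e1 : Real.exp (p * (c + t)) = Real.exp (p * c) * Real.exp (p * t) := by
    rw [← Real.exp_add]; ring_nf
  have e2 : Real.exp (p * (c - t)) = Real.exp (p * c) * Real.exp (-(p * t)) := by
    rw [← Real.exp_add]; ring_nf
  have e3 : Real.exp (c + t) = Real.exp c * Real.exp t := by rw [← Real.exp_add]
  have e4 : Real.exp (c - t) = Real.exp c * Real.exp (-t) := by rw [← Real.exp_add]; ring_nf
  have e5 : Real.exp ((p - 1) * c) * Real.exp c = Real.exp (p * c) := by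
    rw [← Real.exp_add]; ring_nf
  have hpos := Real.exp_pos (p * c)
  calc Real.exp (p * (c + t)) - Real.exp (p * (c - t))
      = Real.exp (p * c) * (Real.exp (p * t) - Real.exp (-(p * t))) := by rw [e1, e2]; ring
    _ ≤ Real.exp (p * c) * (p * (Real.exp t - Real.exp (-t))) := by
        apply mul_le_mul_of_nonneg_left _ hpos.le; linarith
    _ = p * Real.exp ((p - 1) * c) * (Real.exp (c + t) - Real.exp (c - t)) := by
        rw [e3, e4, ← e5]; ring

private lemma rpow_key' (a b p : ℝ) (hb : 0 < b) (hba : b ≤ a) (hp0 : 0 ≤ p) (hp1 : p ≤ 1) :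
    a ^ p - b ^ p ≤ p * ((a * b) ^ ((p - 1) / 2) * (a - b)) := by
  have ha : 0 < a := lt_of_lt_of_le hb hba
  set c := (Real.log a + Real.log b) / 2 with hc
  set t := (Real.log a - Real.log b) / 2 with htdef
  have ht : 0 ≤ t := by
    have := Real.log_le_log hb hba
    simp only [htdef]; linarith
  have hA : a = Real.exp (c + t) := by
    rw [show c + t = Real.log a by rw [hc, htdef]; ring, Real.exp_log ha]
  have hB : b = Real.exp (c - t) := by
    rw [show c - t = Real.log b by rw [hc, htdef]; ring, Real.exp_log hb]
  have hab : (a * b) ^ ((p - 1) / 2) = Real.exp ((p - 1) * c) := by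
    rw [Real.rpow_def_of_pos (mul_pos ha hb), Real.log_mul ha.ne' hb.ne']
    congr 1; rw [hc]; ring
  have hap : a ^ p = Real.exp (p * (c + t)) := by
    rw [Real.rpow_def_of_pos ha, ← Real.log_exp (c + t), ← hA]; ring_nf
  have hbp : b ^ p = Real.exp (p * (c - t)) := by
    rw [Real.rpow_def_of_pos hb, ← Real.log_exp (c - t), ← hB]; ring_nf
  rw [hap, hbp, hab]
  calc Real.exp (p * (c + t)) - Real.exp (p * (c - t))
      ≤ p * Real.exp ((p - 1) * c) * (Real.exp (c + t) - Real.exp (c - t)) :=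
        exp_key' p c t hp0 hp1 ht
    _ = p * (Real.exp ((p - 1) * c) * (a - b)) := by rw [hA, hB]; ring

private lemma core_antitone' (q : ℝ) (hq1 : 3/2 < q) (hq2 : q < 2) :
    AntitoneOn (fun y : ℝ => y ^ q + (1 - y) ^ q + 2 * (q - 1) * (y ^ (q/2) * (1 - y) ^ (q/2)))
      (Set.Icc (1/2 : ℝ) 1) := by
  set f : ℝ → ℝ := fun y => y ^ q + (1 - y) ^ q + 2 * (q - 1) * (y ^ (q/2) * (1 - y) ^ (q/2))
    with hf
  have hq0 : (0:ℝ) < q := by linarith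
  have hd : ∀ y ∈ Set.Ioo (1/2 : ℝ) 1, HasDerivAt f
      (q * y ^ (q - 1) + q * (1 - y) ^ (q - 1) * (-1)
        + 2 * (q - 1) * ((q/2 * y ^ (q/2 - 1)) * (1 - y) ^ (q/2)
            + y ^ (q/2) * (q/2 * (1 - y) ^ (q/2 - 1) * (-1)))) y := by
    intro y hy
    have hy0 : (0:ℝ) < y := by linarith [hy.1]
    have h1y : (0:ℝ) < 1 - y := by linarith [hy.2]
    have hone : HasDerivAt (fun y : ℝ => 1 - y) (-1) y := by
      simpa using (hasDerivAt_id y).const_sub 1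
    have P1 : HasDerivAt (fun y : ℝ => y ^ q) (q * y ^ (q - 1)) y :=
      Real.hasDerivAt_rpow_const (Or.inl hy0.ne')
    have P2 : HasDerivAt (fun y : ℝ => (1 - y) ^ q) (q * (1 - y) ^ (q - 1) * (-1)) y :=
      (Real.hasDerivAt_rpow_const (x := 1 - y) (p := q) (Or.inl h1y.ne')).comp y hone
    have P3 : HasDerivAt (fun y : ℝ => y ^ (q/2)) (q/2 * y ^ (q/2 - 1)) y :=
      Real.hasDerivAt_rpow_const (Or.inl hy0.ne')
    have P4 : HasDerivAt (fun y : ℝ => (1 - y) ^ (q/2)) (q/2 * (1 - y) ^ (q/2 - 1) * (-1)) y :=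
      (Real.hasDerivAt_rpow_const (x := 1 - y) (p := q/2) (Or.inl h1y.ne')).comp y hone
    exact (P1.add P2).add (((P3.mul P4)).const_mul (2 * (q - 1)))
  apply antitoneOn_of_deriv_nonpos (convex_Icc _ _)
  · apply ContinuousOn.add
    apply ContinuousOn.add
    · exact continuousOn_id.rpow_const (fun x _ => Or.inr hq0.le)
    · exact (continuousOn_const.sub continuousOn_id).rpow_const (fun x _ => Or.inr hq0.le)
    · exact continuousOn_const.mul
        ((continuousOn_id.rpow_const (fun x _ => Or.inr (by linarith))).mul
          ((continuousOn_const.sub continuousOn_id).rpow_const (fun x _ => Or.inr (by linarith))))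
  · rw [interior_Icc]
    exact fun y hy => ((hd y hy).differentiableAt).differentiableWithinAt
  · rw [interior_Icc]
    intro y hy
    rw [(hd y hy).deriv]
    have hy0 : (0:ℝ) < y := by linarith [hy.1]
    have h1y : (0:ℝ) < 1 - y := by linarith [hy.2]
    have hba : 1 - y ≤ y := by linarith [hy.1]
    set A := y ^ ((q - 2)/2) with hA
    set B := (1 - y) ^ ((q - 2)/2) with hB
    have hApos : 0 < A := Real.rpow_pos_of_pos hy0 _
    have hBpos : 0 < B := Real.rpow_pos_of_pos h1y _
    have e1 : y ^ (q/2) = A * y := by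
      rw [hA, show q/2 = (q-2)/2 + 1 by ring, Real.rpow_add hy0, Real.rpow_one]
    have e2 : y ^ (q/2 - 1) = A := by rw [hA]; ring_nf
    have e3 : (1 - y) ^ (q/2) = B * (1 - y) := by
      rw [hB, show q/2 = (q-2)/2 + 1 by ring, Real.rpow_add h1y, Real.rpow_one]
    have e4 : (1 - y) ^ (q/2 - 1) = B := by rw [hB]; ring_nf
    have key := rpow_key' y (1 - y) (q - 1) h1y hba (by linarith) (by linarith)
    have eab : (y * (1 - y)) ^ ((q - 1 - 1)/2) = A * B := by
      rw [show (q - 1 - 1)/2 = (q - 2)/2 by ring, Real.mul_rpow hy0.le h1y.le]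
    rw [eab] at key
    rw [e1, e2, e3, e4]
    nlinarith [mul_pos hApos hBpos, key]

private lemma prod_le' (q y : ℝ) (hq0 : 0 ≤ q) (hy0 : 0 ≤ y) (hy1 : y ≤ 1) :
    y ^ (q/2) * (1 - y) ^ (q/2) ≤ (2:ℝ) ^ (-q) := by
  have h1y : (0:ℝ) ≤ 1 - y := by linarith
  rw [← Real.mul_rpow hy0 h1y]
  have hle : y * (1 - y) ≤ 1/4 := by nlinarith [sq_nonneg (y - 1/2)]
  have h := Real.rpow_le_rpow (by nlinarith) hle (by linarith : (0:ℝ) ≤ q/2)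
  refine h.trans_eq ?_
  rw [show (1/4:ℝ) = ((1/2:ℝ)) ^ ((2:ℕ):ℝ) by
        rw [Real.rpow_natCast]; norm_num,
      ← Real.rpow_mul (by norm_num : (0:ℝ) ≤ 1/2)]
  rw [show ((2:ℕ):ℝ) * (q/2) = q by push_cast; ring]
  rw [show ((1:ℝ)/2) = 2⁻¹ by norm_num, Real.inv_rpow (by norm_num), ← Real.rpow_neg (by norm_num)]

theorem stmt_6 (q β : ℝ) (hq1 : 3/2 < q) (hq2 : q < 2) (hβ : q - 1 ≤ β) :
    ((1:ℝ)/2) ^ q + (1 - 1/2 : ℝ) ^ q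
        + 2 * β * ((1:ℝ)/2) ^ (q/2) * (1 - 1/2 : ℝ) ^ (q/2)
      = (1 + β) * (2:ℝ) ^ (1 - q) ∧
    ∀ y ∈ Set.Icc (0:ℝ) 1,
      y ^ q + (1 - y) ^ q + 2 * β * y ^ (q/2) * (1 - y) ^ (q/2)
        ≤ (1 + β) * (2:ℝ) ^ (1 - q) := by
  have h12 : (1 - 1/2 : ℝ) = 1/2 := by norm_num
  have ha : ((1:ℝ)/2) ^ q = (2:ℝ) ^ (-q) := by
    rw [show ((1:ℝ)/2) = 2⁻¹ by norm_num, Real.inv_rpow (by norm_num),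
      ← Real.rpow_neg (by norm_num)]
  have hbb : ((1:ℝ)/2) ^ (q/2) * ((1:ℝ)/2) ^ (q/2) = (2:ℝ) ^ (-q) := by
    rw [← Real.rpow_add (by norm_num : (0:ℝ) < 1/2), show q/2 + q/2 = q by ring, ha]
  have hE : (2:ℝ) ^ (1 - q) = 2 * (2:ℝ) ^ (-q) := by
    rw [show (1:ℝ) - q = 1 + (-q) by ring, Real.rpow_add (by norm_num), Real.rpow_one]
  constructor
  · rw [h12]
    linear_combination 2 * ha + 2 * β * hbb - (1 + β) * hE
  · -- main bound for y in [1/2, 1]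
    have main : ∀ y ∈ Set.Icc (1/2 : ℝ) 1,
        y ^ q + (1 - y) ^ q + 2 * β * y ^ (q/2) * (1 - y) ^ (q/2)
          ≤ (1 + β) * (2:ℝ) ^ (1 - q) := by
      intro y hy
      have hy0 : (0:ℝ) ≤ y := by linarith [hy.1]
      have hy1 : y ≤ 1 := hy.2
      have hcore := core_antitone' q hq1 hq2
        (Set.mem_Icc.2 ⟨le_refl _, by norm_num⟩) hy hy.1
      simp only [h12] at hcore
      have hval : (1/2:ℝ) ^ q + (1 - 1/2:ℝ) ^ q
          + 2 * (q - 1) * ((1/2:ℝ) ^ (q/2) * (1 - 1/2:ℝ) ^ (q/2)) = q * (2:ℝ) ^ (1 - q) := by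
        rw [h12]
        linear_combination 2 * ha + 2 * (q - 1) * hbb - q * hE
      rw [h12] at hval
      have hprod := prod_le' q y (by linarith) hy0 hy1
      have hβ' : 0 ≤ β - (q - 1) := by linarith
      have step : 2 * (β - (q - 1)) * (y ^ (q/2) * (1 - y) ^ (q/2))
          ≤ 2 * (β - (q - 1)) * (2:ℝ) ^ (-q) := by
        apply mul_le_mul_of_nonneg_left hprod (by linarith)
      calc y ^ q + (1 - y) ^ q + 2 * β * y ^ (q/2) * (1 - y) ^ (q/2)
          = (y ^ q + (1 - y) ^ q + 2 * (q - 1) * (y ^ (q/2) * (1 - y) ^ (q/2)))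
            + 2 * (β - (q - 1)) * (y ^ (q/2) * (1 - y) ^ (q/2)) := by ring
        _ ≤ q * (2:ℝ) ^ (1 - q) + 2 * (β - (q - 1)) * (2:ℝ) ^ (-q) := by
            have := hcore.trans_eq hval
            linarith
        _ = (1 + β) * (2:ℝ) ^ (1 - q) := by rw [hE]; ring
    intro y hy
    rcases le_total (1/2 : ℝ) y with h | h
    · exact main y ⟨h, hy.2⟩
    · have := main (1 - y) ⟨by linarith, by linarith [hy.1]⟩
      rw [show (1:ℝ) - (1 - y) = y by ring] at this
      linarith [this]
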